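/- arXiv:1709.01310 — 2 statements merged into one kernel-verified Lean document; each statement's English description precedes it below -/
import Mathlib

section
/- (Lemma 5.1(ii).) Let α ∈ ℝ, let L : (0,∞) → (0,∞) be slowly varying at 0, continuously differentiable on (0,∞), bounded away from 0 on every interval (u, √2] with u > 0, and satisfy |L′(x)| ≤ C(1 + x^{−1}) for all x ∈ (0,1] and some C > 0. Then for every j ∈ ℤ²\{(0,0)} and every b_j ∈ □j, lim_{n→∞} ∫_{□j} ‖x‖^{2α} ( L(‖x‖/n)/L(1/n) − L(‖b_j‖/n)/L(1/n) )² dx = 0. -/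
open MeasureTheory Filter Set Real

noncomputable section

abbrev E2 : Type := EuclideanSpace ℝ (Fin 2)

/-- The closed square of side length `r` centred at `c`. -/
def sqC (c : E2) (r : ℝ) : Set E2 :=
  {x : E2 | |x 0 - c 0| ≤ r / 2 ∧ |x 1 - c 1| ≤ r / 2}

/-- The point of `ℝ²` corresponding to `j ∈ ℤ²`. -/
def jv (j : ℤ × ℤ) : E2 := WithLp.toLp 2 ![(j.1 : ℝ), (j.2 : ℝ)]

/-- `L` is slowly varying at `0`. -/
def SlowlyVaryingAtZero (L : ℝ → ℝ) : Prop :=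
  ∀ δ : ℝ, 0 < δ → Tendsto (fun x => L (δ * x) / L x) (nhdsWithin 0 (Set.Ioi 0)) (nhds 1)

private lemma logL_cont {L : ℝ → ℝ} (hLpos : ∀ y : ℝ, 0 < y → 0 < L y)
    (hL : ContinuousOn L (Set.Ioi 0)) {x : ℝ} (hx : 0 < x) :
    Continuous fun c : ℝ => Real.log (L (Real.exp c * x)) := by
  rw [continuous_iff_continuousAt]
  intro c
  have h1 : 0 < Real.exp c * x := mul_pos (Real.exp_pos c) hx
  have hc2 : ContinuousAt L (Real.exp c * x) := hL.continuousAt (Ioi_mem_nhds h1)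
  have hc1 : ContinuousAt (fun c : ℝ => Real.exp c * x) c :=
    (Real.continuous_exp.mul continuous_const).continuousAt
  have hc3 : ContinuousAt (L ∘ fun c : ℝ => Real.exp c * x) c :=
    ContinuousAt.comp (f := fun c : ℝ => Real.exp c * x) hc2 hc1
  exact ContinuousAt.comp (f := L ∘ fun c : ℝ => Real.exp c * x)
    (Real.continuousAt_log (ne_of_gt (hLpos _ h1))) hc3

private lemma uct {L : ℝ → ℝ} (hLpos : ∀ y : ℝ, 0 < y → 0 < L y)
    (hSV : SlowlyVaryingAtZero L) (hL : ContinuousOn L (Set.Ioi 0))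
    {T ε : ℝ} (hT : 0 < T) (hε : 0 < ε) :
    ∃ x₀ > (0:ℝ), ∀ x ∈ Set.Ioc 0 x₀, ∀ c ∈ Set.Icc (-T) T,
      |Real.log (L (Real.exp c * x)) - Real.log (L x)| ≤ 2 * ε := by
  set φ : ℝ → ℝ → ℝ := fun c x => Real.log (L (Real.exp c * x)) - Real.log (L x) with hφ
  set S : ℕ → Set ℝ := fun m =>
    Icc 0 (2*T) ∩ {c | ∀ x ∈ Set.Ioc (0:ℝ) ((m:ℝ)+1)⁻¹, |φ c x| ≤ ε} with hS
  have hSclosed : ∀ m, IsClosed (S m) := by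
    intro m
    apply isClosed_Icc.inter
    have : {c | ∀ x ∈ Set.Ioc (0:ℝ) ((m:ℝ)+1)⁻¹, |φ c x| ≤ ε}
        = ⋂ x ∈ Set.Ioc (0:ℝ) ((m:ℝ)+1)⁻¹, {c | |φ c x| ≤ ε} := by
      ext c; simp
    rw [this]
    refine isClosed_biInter fun x hx => ?_
    have hcont : Continuous fun c => |φ c x| :=
      ((logL_cont hLpos hL hx.1).sub continuous_const).abs
    exact isClosed_le hcont continuous_const
  have hSmono : Monotone S := by
    intro m n hmn
    refine inter_subset_inter le_rfl ?_
    intro c hc x hx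
    exact hc x ⟨hx.1, hx.2.trans (by
      apply inv_anti₀ (by positivity)
      have : (m:ℝ) ≤ n := Nat.cast_le.mpr hmn
      linarith)⟩
  have hSunion : ⋃ m, S m = Icc 0 (2*T) := by
    apply Subset.antisymm
    · exact iUnion_subset fun m => inter_subset_left
    · intro c hc
      have hδ : (0:ℝ) < Real.exp c := Real.exp_pos c
      have h1 : Tendsto (fun x => L (Real.exp c * x) / L x) (nhdsWithin 0 (Set.Ioi 0)) (nhds 1) :=
        hSV _ hδ
      have h2 : Tendsto (fun x => Real.log (L (Real.exp c * x) / L x))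
          (nhdsWithin 0 (Set.Ioi 0)) (nhds 0) := by
        have := (Real.continuousAt_log one_ne_zero).tendsto.comp h1
        rwa [Real.log_one] at this
      have h3 : Tendsto (fun x => φ c x) (nhdsWithin 0 (Set.Ioi 0)) (nhds 0) := by
        apply h2.congr'
        filter_upwards [self_mem_nhdsWithin] with x hx
        have hx0 : (0:ℝ) < x := hx
        rw [Real.log_div (ne_of_gt (hLpos _ (mul_pos hδ hx0))) (ne_of_gt (hLpos _ hx0))]
      have h4 : ∀ᶠ x in nhdsWithin 0 (Set.Ioi 0), |φ c x| ≤ ε := by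
        filter_upwards [h3.eventually (eventually_abs_sub_lt 0 hε)] with x hx
        rw [sub_zero] at hx
        exact hx.le
      rw [eventually_iff, Metric.mem_nhdsWithin_iff] at h4
      obtain ⟨η, hη, hball⟩ := h4
      obtain ⟨m, hm⟩ := exists_nat_gt (1/η)
      refine mem_iUnion.mpr ⟨m, hc, fun x hx => ?_⟩
      apply hball
      constructor
      · rw [Metric.mem_ball, Real.dist_eq, sub_zero, abs_of_pos hx.1]
        calc x ≤ ((m:ℝ)+1)⁻¹ := hx.2
          _ < η := by
            rw [inv_lt_comm₀ (by positivity) hη]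
            calc η⁻¹ = 1/η := (one_div η).symm
              _ < m := hm
              _ < m+1 := by linarith
      · exact hx.1
  have hTend : Tendsto (fun m => volume (S m)) atTop (nhds (ENNReal.ofReal (2*T))) := by
    have := tendsto_measure_iUnion_atTop (μ := volume) hSmono
    rwa [hSunion, Real.volume_Icc, show 2*T - 0 = 2*T by ring] at this
  have hlt : ENNReal.ofReal (7*T/4) < ENNReal.ofReal (2*T) := by
    rw [ENNReal.ofReal_lt_ofReal_iff (by linarith)]; linarith
  obtain ⟨M, hM⟩ := (hTend.eventually (eventually_gt_nhds hlt)).exists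
  refine ⟨((M:ℝ)+1)⁻¹, by positivity, fun x hx c hc => ?_⟩
  set B' : Set ℝ := (fun y => y - c) ⁻¹' (S M) with hB'
  have hvolB' : volume B' = volume (S M) := by
    have he : (fun y : ℝ => y - c) = fun y => y + (-c) := by funext y; ring
    rw [hB', he, measure_preimage_add_right]
  have hinter : (S M ∩ B').Nonempty := by
    by_contra hempty
    rw [not_nonempty_iff_eq_empty] at hempty
    have hd : Disjoint (S M) B' := disjoint_iff_inter_eq_empty.mpr hempty
    have hBmeas : MeasurableSet B' :=
      (hSclosed M).measurableSet.preimage (measurable_id.sub measurable_const)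
    have h5 : volume (S M ∪ B') = volume (S M) + volume B' := measure_union hd hBmeas
    have hsub : S M ∪ B' ⊆ Icc (min 0 c) (2*T + max 0 c) := by
      rintro y (hy | hy)
      · exact ⟨le_trans (min_le_left _ _) hy.1.1,
          le_trans hy.1.2 (by nlinarith [le_max_left (0:ℝ) c])⟩
      · have hy2 : y - c ∈ Icc (0:ℝ) (2*T) := hy.1
        exact ⟨by linarith [hy2.1, min_le_right (0:ℝ) c],
          by linarith [hy2.2, le_max_right (0:ℝ) c]⟩
    have h7 : 2*T + max 0 c - min 0 c ≤ 3*T := by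
      rcases le_total 0 c with h | h
      · rw [max_eq_right h, min_eq_left h]; linarith [hc.2]
      · rw [max_eq_left h, min_eq_right h]; linarith [hc.1]
    have h6 : volume (S M ∪ B') ≤ ENNReal.ofReal (3*T) := by
      refine le_trans (measure_mono hsub) ?_
      rw [Real.volume_Icc]
      exact ENNReal.ofReal_le_ofReal h7
    have h8 : ENNReal.ofReal (7*T/4) + ENNReal.ofReal (7*T/4)
        < volume (S M) + volume B' := by
      exact ENNReal.add_lt_add hM (hvolB' ▸ hM)
    rw [← ENNReal.ofReal_add (by linarith) (by linarith), ← h5] at h8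
    have h9 : ENNReal.ofReal (7*T/4 + 7*T/4) ≤ ENNReal.ofReal (3*T) := le_of_lt (h8.trans_le h6)
    rw [ENNReal.ofReal_le_ofReal_iff (by linarith)] at h9
    linarith
  obtain ⟨c₂, hc₂S, hc₂B'⟩ := hinter
  have hc₁S : c₂ - c ∈ S M := hc₂B'
  set c₁ : ℝ := c₂ - c with hc₁
  set y : ℝ := Real.exp (-c₁) * x with hy
  have hy0 : 0 < y := mul_pos (Real.exp_pos _) hx.1
  have hc₁0 : 0 ≤ c₁ := hc₁S.1.1
  have hyle : y ≤ ((M:ℝ)+1)⁻¹ := by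
    refine le_trans ?_ hx.2
    rw [hy]
    exact mul_le_of_le_one_left hx.1.le (Real.exp_le_one_iff.mpr (by linarith))
  have h₂ : |φ c₂ y| ≤ ε := hc₂S.2 y ⟨hy0, hyle⟩
  have h₁ : |φ c₁ y| ≤ ε := hc₁S.2 y ⟨hy0, hyle⟩
  have e2 : Real.exp c₁ * y = x := by
    rw [hy, ← mul_assoc, ← Real.exp_add, add_neg_cancel, Real.exp_zero, one_mul]
  have e1 : Real.exp c₂ * y = Real.exp c * x := by
    rw [hy, ← mul_assoc, ← Real.exp_add]
    congr 1
    rw [hc₁]; ring_nf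
  have key : φ c x = φ c₂ y - φ c₁ y := by
    simp only [hφ]
    rw [e1, e2]
    ring
  calc |Real.log (L (Real.exp c * x)) - Real.log (L x)| = |φ c₂ y - φ c₁ y| := by rw [← key]
    _ ≤ |φ c₂ y| + |φ c₁ y| := by
        rw [sub_eq_add_neg]
        exact le_trans (abs_add_le _ _) (by rw [abs_neg])
    _ ≤ 2 * ε := by linarith

private lemma uct_ratio {L : ℝ → ℝ} (hLpos : ∀ y : ℝ, 0 < y → 0 < L y)
    (hSV : SlowlyVaryingAtZero L) (hL : ContinuousOn L (Set.Ioi 0))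
    {a b : ℝ} (ha : 0 < a) (hab : a ≤ b) {ε : ℝ} (hε : 0 < ε) :
    ∃ x₀ > (0:ℝ), ∀ x ∈ Set.Ioc 0 x₀, ∀ δ ∈ Set.Icc a b, |L (δ * x) / L x - 1| ≤ ε := by
  set T : ℝ := max |Real.log a| |Real.log b| + 1 with hT'
  have hT : 0 < T := by positivity
  set ε' : ℝ := min (ε/16) 1 with hε'
  have hε'pos : 0 < ε' := lt_min (by linarith) one_pos
  have hε'le : ε' ≤ 1 := min_le_right _ _
  obtain ⟨x₀, hx₀, H⟩ := uct hLpos hSV hL hT hε'pos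
  refine ⟨x₀, hx₀, fun x hx δ hδ => ?_⟩
  have hδ0 : 0 < δ := lt_of_lt_of_le ha hδ.1
  have hcmem : Real.log δ ∈ Set.Icc (-T) T := by
    have h1 : Real.log a ≤ Real.log δ := Real.log_le_log ha hδ.1
    have h2 : Real.log δ ≤ Real.log b := Real.log_le_log hδ0 hδ.2
    have ha' : |Real.log a| ≤ T := by
      rw [hT']; exact le_trans (le_max_left _ _) (by linarith)
    have hb' : |Real.log b| ≤ T := by
      rw [hT']; exact le_trans (le_max_right _ _) (by linarith)
    constructor
    · linarith [neg_abs_le (Real.log a)]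
    · linarith [le_abs_self (Real.log b)]
  have hkey := H x hx (Real.log δ) hcmem
  rw [Real.exp_log hδ0] at hkey
  set r : ℝ := L (δ * x) / L x with hr
  have hr0 : 0 < r := div_pos (hLpos _ (mul_pos hδ0 hx.1)) (hLpos _ hx.1)
  have hlogr : |Real.log r| ≤ 2*ε' := by
    rw [hr, Real.log_div (ne_of_gt (hLpos _ (mul_pos hδ0 hx.1))) (ne_of_gt (hLpos _ hx.1))]
    exact hkey
  have hs1 : Real.log r ≤ 2*ε' := (abs_le.mp hlogr).2
  have hs2 : -(2*ε') ≤ Real.log r := (abs_le.mp hlogr).1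
  have h16 : |r - 1| ≤ 16 * ε' := by
    rcases le_or_gt 1 r with h | h
    · rw [abs_of_nonneg (by linarith)]
      have hrexp : r = Real.exp (Real.log r) := (Real.exp_log hr0).symm
      have hup : r ≤ Real.exp (2*ε') := by rw [hrexp]; exact Real.exp_le_exp.mpr hs1
      have hprod : Real.exp (2*ε') * Real.exp (-(2*ε')) = 1 := by
        rw [← Real.exp_add, add_neg_cancel, Real.exp_zero]
      have hineq : Real.exp (2*ε') - 1 ≤ (2*ε') * Real.exp (2*ε') := by
        nlinarith [mul_le_mul_of_nonneg_left (Real.add_one_le_exp (-(2*ε')))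
          (Real.exp_pos (2*ε')).le, hprod]
      have hexp2 : Real.exp (2*ε') ≤ Real.exp 2 := Real.exp_le_exp.mpr (by linarith)
      have hexp8 : Real.exp 2 ≤ 8 := by
        rw [show (2:ℝ) = 1+1 by norm_num, Real.exp_add]
        nlinarith [Real.exp_one_lt_d9, Real.exp_pos 1]
      nlinarith [hε'pos]
    · rw [abs_of_nonpos (by linarith)]
      have hlow : Real.exp (-(2*ε')) ≤ r := by
        rw [← Real.exp_log hr0]; exact Real.exp_le_exp.mpr hs2
      have h1 : 1 - 2*ε' ≤ Real.exp (-(2*ε')) := by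
        have := Real.add_one_le_exp (-(2*ε')); linarith
      linarith
  have : ε' ≤ ε/16 := min_le_left _ _
  linarith

private lemma coord_le_norm (y : E2) (i : Fin 2) : |y i| ≤ ‖y‖ := by
  rw [EuclideanSpace.norm_eq, ← Real.sqrt_sq_eq_abs]
  apply Real.sqrt_le_sqrt
  rw [Fin.sum_univ_two]
  fin_cases i <;> simp [Real.norm_eq_abs, sq_abs] <;>
    nlinarith [sq_nonneg (y 0), sq_nonneg (y 1)]

theorem stmt5 (α : ℝ)
    (L : ℝ → ℝ) (hLpos : ∀ x : ℝ, 0 < x → 0 < L x)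
    (hSV : SlowlyVaryingAtZero L)
    (hA1 : ContDiffOn ℝ 1 L (Set.Ioi 0))
    (hA1' : ∀ u : ℝ, 0 < u → ∃ ε > (0 : ℝ), ∀ x ∈ Set.Ioc u (Real.sqrt 2), ε ≤ L x)
    (C : ℝ) (hC : 0 < C)
    (hA4 : ∀ x ∈ Set.Ioc (0 : ℝ) 1, |deriv L x| ≤ C * (1 + x⁻¹))
    (j : ℤ × ℤ) (hj : j ≠ 0) (bj : E2) (hbj : bj ∈ sqC (jv j) 1) :
    Tendsto (fun n : ℕ => ∫ x in sqC (jv j) 1,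
        ‖x‖ ^ (2 * α) * (L (‖x‖ / n) / L (1 / n) - L (‖bj‖ / n) / L (1 / n)) ^ 2)
      atTop (nhds 0) := by
  have hL : ContinuousOn L (Set.Ioi 0) := hA1.continuousOn
  set s : Set E2 := sqC (jv j) 1 with hs
  set b : ℝ := ‖jv j‖ + 1 with hbdef
  -- lower bound on norms
  have hlow : ∀ x ∈ s, (1:ℝ)/2 ≤ ‖x‖ := by
    intro x hx
    obtain ⟨h0, h1⟩ := hx
    have hj' : j.1 ≠ 0 ∨ j.2 ≠ 0 := by
      by_contra hcon
      push_neg at hcon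
      exact hj (Prod.ext hcon.1 hcon.2)
    rcases hj' with h | h
    · have h1' : (1:ℝ) ≤ |(j.1 : ℝ)| := by
        rw [← Int.cast_abs]
        exact_mod_cast Int.one_le_abs h
      have h2' : |(j.1:ℝ)| - |x 0| ≤ |x 0 - jv j 0| := by
        have := abs_sub_abs_le_abs_sub ((j.1:ℝ)) (x 0)
        rw [abs_sub_comm] at this
        exact this
      linarith [coord_le_norm x 0]
    · have h1' : (1:ℝ) ≤ |(j.2 : ℝ)| := by
        rw [← Int.cast_abs]
        exact_mod_cast Int.one_le_abs h
      have h2' : |(j.2:ℝ)| - |x 1| ≤ |x 1 - jv j 1| := by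
        have := abs_sub_abs_le_abs_sub ((j.2:ℝ)) (x 1)
        rw [abs_sub_comm] at this
        exact this
      linarith [coord_le_norm x 1]
  have hdist : ∀ x ∈ s, ‖x - jv j‖ ≤ 1 := by
    intro x hx
    obtain ⟨h0, h1⟩ := hx
    rw [EuclideanSpace.norm_eq, Fin.sum_univ_two]
    rw [show (1:ℝ) = Real.sqrt 1 by simp]
    apply Real.sqrt_le_sqrt
    have e0 : (x - jv j) 0 = x 0 - jv j 0 := rfl
    have e1 : (x - jv j) 1 = x 1 - jv j 1 := rfl
    rw [e0, e1, Real.norm_eq_abs, Real.norm_eq_abs, sq_abs, sq_abs]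
    nlinarith [abs_nonneg (x 0 - jv j 0), abs_nonneg (x 1 - jv j 1),
      sq_abs (x 0 - jv j 0), sq_abs (x 1 - jv j 1)]
  have hub : ∀ x ∈ s, ‖x‖ ≤ b := by
    intro x hx
    calc ‖x‖ = ‖jv j + (x - jv j)‖ := by rw [add_sub_cancel]
      _ ≤ ‖jv j‖ + ‖x - jv j‖ := norm_add_le _ _
      _ ≤ b := by rw [hbdef]; linarith [hdist x hx]
  have hab : (1:ℝ)/2 ≤ b := by
    rw [hbdef]; linarith [norm_nonneg (jv j)]
  -- bound on the rpow factor
  set B : ℝ := ((1:ℝ)/2) ^ (2*α) + b ^ (2*α) with hBdef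
  have hbpos : (0:ℝ) < b := by linarith
  have hB0 : 0 < B := by
    rw [hBdef]
    have := Real.rpow_pos_of_pos (show (0:ℝ) < 1/2 by norm_num) (2*α)
    have := Real.rpow_pos_of_pos hbpos (2*α)
    linarith
  have hBbound : ∀ x ∈ s, ‖x‖ ^ (2*α) ≤ B := by
    intro x hx
    rcases le_or_gt 0 (2*α) with h | h
    · have h1 : ‖x‖ ^ (2*α) ≤ b ^ (2*α) := Real.rpow_le_rpow (norm_nonneg x) (hub x hx) h
      have h2 : (0:ℝ) ≤ ((1:ℝ)/2) ^ (2*α) := Real.rpow_nonneg (by norm_num) _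
      rw [hBdef]; linarith
    · have h1 : ‖x‖ ^ (2*α) ≤ ((1:ℝ)/2) ^ (2*α) :=
        Real.rpow_le_rpow_of_nonpos (by norm_num) (hlow x hx) h.le
      have h2 : (0:ℝ) ≤ b ^ (2*α) := Real.rpow_nonneg hbpos.le _
      rw [hBdef]; linarith
  -- measurability and finite volume of s
  have hclosed : IsClosed s := by
    have hseq : s = {x : E2 | |x 0 - jv j 0| ≤ 1/2} ∩ {x : E2 | |x 1 - jv j 1| ≤ 1/2} := rfl
    rw [hseq]
    have hc0 : Continuous fun x : E2 => x 0 := (continuous_apply _).comp (PiLp.continuous_ofLp 2 _)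
    have hc1 : Continuous fun x : E2 => x 1 := (continuous_apply _).comp (PiLp.continuous_ofLp 2 _)
    exact (isClosed_le ((hc0.sub continuous_const).abs) continuous_const).inter
      (isClosed_le ((hc1.sub continuous_const).abs) continuous_const)
  have hmeas : MeasurableSet s := hclosed.measurableSet
  have hvol : volume s < ⊤ := by
    have hsubball : s ⊆ Metric.closedBall (jv j) 1 := by
      intro x hx
      rw [Metric.mem_closedBall, dist_eq_norm]
      exact hdist x hx
    exact lt_of_le_of_lt (measure_mono hsubball) measure_closedBall_lt_top
  set V : ℝ := (volume s).toReal with hVdef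
  have hV0 : 0 ≤ V := ENNReal.toReal_nonneg
  -- main estimate
  rw [NormedAddCommGroup.tendsto_nhds_zero]
  intro ε₀ hε₀
  set ε : ℝ := min 1 (ε₀ / (4*B*V + 1)) with hεdef
  have hεpos : 0 < ε := lt_min one_pos (by positivity)
  have hε1 : ε ≤ 1 := min_le_left _ _
  obtain ⟨x₀, hx₀pos, H⟩ := uct_ratio hLpos hSV hL (show (0:ℝ) < 1/2 by norm_num) hab hεpos
  filter_upwards [eventually_ge_atTop (max 1 ⌈x₀⁻¹⌉₊)] with n hn
  have hn1 : 1 ≤ n := le_trans (le_max_left _ _) hn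
  have hnpos : (0:ℝ) < n := by exact_mod_cast Nat.lt_of_lt_of_le Nat.zero_lt_one hn1
  have hceil : x₀⁻¹ ≤ (n:ℝ) := by
    have := le_trans (le_max_right 1 ⌈x₀⁻¹⌉₊) hn
    exact_mod_cast Nat.ceil_le.mp this
  have htx : (1:ℝ)/n ∈ Set.Ioc 0 x₀ := by
    constructor
    · positivity
    · rw [one_div]
      calc (n:ℝ)⁻¹ ≤ (x₀⁻¹)⁻¹ := inv_anti₀ (by positivity) hceil
        _ = x₀ := inv_inv x₀
  have hratio : ∀ δ ∈ Set.Icc ((1:ℝ)/2) b, |L (δ / n) / L (1/n) - 1| ≤ ε := by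
    intro δ hδ
    have := H (1/n) htx δ hδ
    rwa [show δ * (1/(n:ℝ)) = δ / n by ring] at this
  have hbound : ∀ x ∈ s,
      ‖‖x‖ ^ (2*α) * (L (‖x‖/n)/L (1/n) - L (‖bj‖/n)/L (1/n))^2‖ ≤ B * (4*ε^2) := by
    intro x hx
    have h1 := hratio ‖x‖ ⟨hlow x hx, hub x hx⟩
    have h2 := hratio ‖bj‖ ⟨hlow bj hbj, hub bj hbj⟩
    have hd : |L (‖x‖/n)/L (1/n) - L (‖bj‖/n)/L (1/n)| ≤ 2*ε := by
      have he : L (‖x‖/n)/L (1/n) - L (‖bj‖/n)/L (1/n)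
          = (L (‖x‖/n)/L (1/n) - 1) - (L (‖bj‖/n)/L (1/n) - 1) := by ring
      rw [he, sub_eq_add_neg]
      refine le_trans (abs_add_le _ _) ?_
      rw [abs_neg]
      linarith
    have hsq : (L (‖x‖/n)/L (1/n) - L (‖bj‖/n)/L (1/n))^2 ≤ 4*ε^2 := by
      have := abs_le.mp hd
      nlinarith
    have hnn : (0:ℝ) ≤ ‖x‖ ^ (2*α) := Real.rpow_nonneg (norm_nonneg x) _
    rw [Real.norm_eq_abs, abs_of_nonneg (mul_nonneg hnn (sq_nonneg _))]
    exact mul_le_mul (hBbound x hx) hsq (sq_nonneg _) hB0.le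
  have hcontOn : ContinuousOn
      (fun x : E2 => ‖x‖ ^ (2*α) * (L (‖x‖/n)/L (1/n) - L (‖bj‖/n)/L (1/n))^2) s := by
    have hrpow : ContinuousOn (fun x : E2 => ‖x‖ ^ (2*α)) s := by
      intro x hx
      have h1 : ‖x‖ ≠ 0 := by have := hlow x hx; positivity
      exact (ContinuousAt.comp (Real.continuousAt_rpow_const _ _ (Or.inl h1))
        continuous_norm.continuousAt).continuousWithinAt
    have hLcomp : ContinuousOn (fun x : E2 => L (‖x‖ / n)) s := by
      apply hL.comp ((continuous_norm.div_const _).continuousOn)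
      intro x hx
      have := hlow x hx
      exact mem_Ioi.mpr (by positivity)
    exact hrpow.mul (((hLcomp.div_const _).sub continuousOn_const).pow 2)
  have haesm : AEStronglyMeasurable
      (fun x : E2 => ‖x‖ ^ (2*α) * (L (‖x‖/n)/L (1/n) - L (‖bj‖/n)/L (1/n))^2)
      (volume.restrict s) := hcontOn.aestronglyMeasurable hmeas
  have hint := norm_setIntegral_le_of_norm_le_const (μ := volume) hvol hbound
  calc ‖∫ x in s, ‖x‖ ^ (2*α) * (L (‖x‖/n)/L (1/n) - L (‖bj‖/n)/L (1/n))^2‖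
      ≤ (B*(4*ε^2)) * V := hint
    _ < ε₀ := by
      have hε2 : ε ≤ ε₀ / (4*B*V + 1) := min_le_right _ _
      have h3 : ε * (4*B*V+1) ≤ ε₀ := by
        rw [← le_div_iff₀ (by positivity)]; exact hε2
      nlinarith [mul_le_mul_of_nonneg_left (show ε^2 ≤ ε by nlinarith)
        (show (0:ℝ) ≤ 4*B*V by positivity), hεpos]
end
end

section
/- (Lemma 5.1, central cell.) Let α > −1, let L : (0,∞) → (0,∞) be slowly varying at 0, continuously differentiable on (0,∞), bounded away from 0 on every interval (u, √2] with u > 0, and satisfy |L′(x)| ≤ C(1 + x^{−1}) for all x ∈ (0,1] and some C > 0. Then for every b₀ ∈ □(0,0) with b₀ ≠ 0, both limits hold: lim_{n→∞} ∫_{□(0,0)} ( ‖x‖^α · L(‖x‖/n)/L(1/n) − ‖b₀‖^α · L(‖b₀‖/n)/L(1/n) )² dx = ∫_{□(0,0)} (‖x‖^α − ‖b₀‖^α)² dx, and lim_{n→∞} ∫_{□(0,0)} ‖x‖^{2α} ( L(‖x‖/n)/L(1/n) − L(‖b₀‖/n)/L(1/n) )² dx = 0. -/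
open MeasureTheory Filter Set Real

noncomputable section

lemma mem_sqC01 {x : E2} : x ∈ sqC 0 1 ↔ |x 0| ≤ 1/2 ∧ |x 1| ≤ 1/2 := by
  simp [sqC]

lemma isClosed_sqC01 : IsClosed (sqC 0 1) := by
  have h0 : Continuous (fun x : E2 => |x 0 - (0:E2) 0|) :=
    (((EuclideanSpace.proj (0 : Fin 2)).continuous).sub continuous_const).abs
  have h1 : Continuous (fun x : E2 => |x 1 - (0:E2) 1|) :=
    (((EuclideanSpace.proj (1 : Fin 2)).continuous).sub continuous_const).abs
  have : sqC 0 1 = (fun x : E2 => |x 0 - (0:E2) 0|) ⁻¹' (Iic (1/2)) ∩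
      (fun x : E2 => |x 1 - (0:E2) 1|) ⁻¹' (Iic (1/2)) := rfl
  rw [this]
  exact ((isClosed_Iic.preimage h0).inter (isClosed_Iic.preimage h1))

lemma meas_sqC01 : MeasurableSet (sqC 0 1) := isClosed_sqC01.measurableSet

lemma normsq_eq (x : E2) : ‖x‖^2 = (x 0)^2 + (x 1)^2 := by
  rw [EuclideanSpace.norm_eq, Fin.sum_univ_two, Real.sq_sqrt (by positivity)]
  simp [Real.norm_eq_abs, sq_abs]

lemma norm_le_sqC01 {x : E2} (hx : x ∈ sqC 0 1) : ‖x‖ ≤ 1 := by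
  rw [mem_sqC01] at hx
  have h := normsq_eq x
  nlinarith [norm_nonneg x, abs_nonneg (x 0), abs_nonneg (x 1), sq_abs (x 0), sq_abs (x 1)]

lemma isCompact_sqC01 : IsCompact (sqC 0 1) := by
  apply Metric.isCompact_of_isClosed_isBounded isClosed_sqC01
  apply (Metric.isBounded_closedBall (x := (0:E2)) (r := 1)).subset
  intro x hx
  simpa [Metric.mem_closedBall, dist_zero_right] using norm_le_sqC01 hx

lemma int1D {q : ℝ} (hq : -1 < q) :
    IntegrableOn (fun t : ℝ => |t| ^ q) (Icc (-(1/2) : ℝ) (1/2)) volume := by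
  have hpos : IntegrableOn (fun t : ℝ => |t| ^ q) (Icc (0:ℝ) (1/2)) volume := by
    have h1 : IntegrableOn (fun t : ℝ => t ^ q) (Ioo (0:ℝ) (1/2)) volume :=
      (intervalIntegral.integrableOn_Ioo_rpow_iff (by norm_num)).2 hq
    have h2 : IntegrableOn (fun t : ℝ => t ^ q) (Icc (0:ℝ) (1/2)) volume :=
      h1.congr_set_ae Ioo_ae_eq_Icc.symm
    exact h2.congr_fun (fun t ht => by rw [abs_of_nonneg ht.1]) measurableSet_Icc
  have hneg : IntegrableOn (fun t : ℝ => |t| ^ q) (Icc (-(1/2):ℝ) 0) volume := by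
    rw [← integrable_indicator_iff measurableSet_Icc]
    have hkey : (Icc (-(1/2):ℝ) 0).indicator (fun t : ℝ => |t| ^ q)
        = ((Icc (0:ℝ) (1/2)).indicator (fun t : ℝ => |t| ^ q)) ∘ Neg.neg := by
      funext t
      have hmem : (-t ∈ Icc (0:ℝ) (1/2)) ↔ t ∈ Icc (-(1/2):ℝ) 0 := by
        simp only [mem_Icc]
        constructor <;> (intro h; constructor <;> linarith [h.1, h.2])
      have heq : (t ∈ Icc (-(1/2):ℝ) 0) = (-t ∈ Icc (0:ℝ) (1/2)) := propext hmem.symm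
      simp only [indicator, Function.comp_apply, abs_neg, heq]
    rw [hkey]
    exact ((Measure.measurePreserving_neg (volume : Measure ℝ)).integrable_comp_emb
      (MeasurableEquiv.neg ℝ).measurableEmbedding).2
      ((integrable_indicator_iff measurableSet_Icc).2 hpos)
  have := hneg.union hpos
  apply this.mono_set
  intro t ht
  rcases le_total t 0 with h | h
  · exact Or.inl ⟨ht.1, h⟩
  · exact Or.inr ⟨h, ht.2⟩

lemma null_coord (i : Fin 2) : volume {x : E2 | x i = 0} = 0 := by
  have hker : {x : E2 | x i = 0} = (LinearMap.ker ((EuclideanSpace.proj i :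
      EuclideanSpace ℝ (Fin 2) →L[ℝ] ℝ) : E2 →ₗ[ℝ] ℝ) : Submodule ℝ E2) := by
    ext x; simp [LinearMap.mem_ker]
  rw [hker]
  apply Measure.addHaar_submodule
  intro htop
  have h1 : (EuclideanSpace.single i (1:ℝ) : E2) ∈ (⊤ : Submodule ℝ E2) := trivial
  rw [← htop, LinearMap.mem_ker] at h1
  rw [show ((EuclideanSpace.proj i : EuclideanSpace ℝ (Fin 2) →L[ℝ] ℝ) :
      E2 →ₗ[ℝ] ℝ) (EuclideanSpace.single i (1:ℝ)) = 1 by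
    simp [EuclideanSpace.single_apply]] at h1
  exact one_ne_zero h1

lemma null_zero_E2 : volume ({0} : Set E2) = 0 := by
  refine measure_mono_null ?_ (null_coord 0)
  intro x hx; simp at hx; simp [hx]

lemma norm_pos_of_coord {x : E2} (h : x 0 ≠ 0) : 0 < ‖x‖ := by
  have : x ≠ 0 := by intro h0; exact h (by simp [h0])
  simpa [norm_pos_iff] using this

lemma int2D {p : ℝ} (hp : -2 < p) :
    IntegrableOn (fun x : E2 => ‖x‖ ^ p) (sqC 0 1) volume := by
  rcases le_or_gt 0 p with hp0 | hp0
  · have hcont : Continuous (fun x : E2 => ‖x‖ ^ p) :=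
      continuous_norm.rpow_const (fun x => Or.inr hp0)
    exact hcont.continuousOn.integrableOn_compact isCompact_sqC01
  · set q := p / 2 with hqdef
    have hq : -1 < q := by rw [hqdef]; linarith
    have hq0 : q < 0 := by rw [hqdef]; linarith
    set f : ℝ → ℝ := fun t => |t| ^ q with hf
    set F : Fin 2 → ℝ → ℝ := fun _ => (Icc (-(1/2):ℝ) (1/2)).indicator f with hF
    have h1 : ∀ i : Fin 2, Integrable (F i) volume := fun i =>
      (integrable_indicator_iff measurableSet_Icc).2 (int1D hq)
    have h2 : Integrable (fun x : Fin 2 → ℝ => ∏ i, F i (x i)) volume :=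
      Integrable.fintype_prod (𝕜 := ℝ) h1
    have h3 : Integrable (fun x : E2 => ∏ i : Fin 2, F i (x i)) volume := by
      exact ((EuclideanSpace.volume_preserving_symm_measurableEquiv_toLp (Fin 2)).integrable_comp_emb
        (MeasurableEquiv.measurableEmbedding _)).2 h2
    have h4 : (fun x : E2 => ∏ i : Fin 2, F i (x i))
        = (sqC 0 1).indicator (fun x : E2 => |x 0| ^ q * |x 1| ^ q) := by
      funext x
      rw [Fin.prod_univ_two]
      by_cases hx : x ∈ sqC 0 1
      · rcases mem_sqC01.1 hx with ⟨hx0, hx1⟩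
        have m0 : x 0 ∈ Icc (-(1/2):ℝ) (1/2) := abs_le.1 hx0
        have m1 : x 1 ∈ Icc (-(1/2):ℝ) (1/2) := abs_le.1 hx1
        rw [indicator_of_mem hx]
        show (Icc (-(1/2):ℝ) (1/2)).indicator f (x 0) * (Icc (-(1/2):ℝ) (1/2)).indicator f (x 1) = _
        rw [indicator_of_mem m0, indicator_of_mem m1]
      · rw [indicator_of_notMem hx]
        have : ¬ (x 0 ∈ Icc (-(1/2):ℝ) (1/2)) ∨ ¬ (x 1 ∈ Icc (-(1/2):ℝ) (1/2)) := by
          by_contra hcon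
          push_neg at hcon
          exact hx (mem_sqC01.2 ⟨abs_le.2 hcon.1, abs_le.2 hcon.2⟩)
        show (Icc (-(1/2):ℝ) (1/2)).indicator f (x 0) * (Icc (-(1/2):ℝ) (1/2)).indicator f (x 1) = 0
        rcases this with h | h
        · rw [indicator_of_notMem h, zero_mul]
        · rw [indicator_of_notMem h, mul_zero]
    rw [h4, integrable_indicator_iff meas_sqC01] at h3
    -- now dominate ‖x‖^p by |x 0|^q * |x 1|^q a.e.
    have haesm : AEStronglyMeasurable (fun x : E2 => ‖x‖ ^ p) (volume.restrict (sqC 0 1)) := by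
      have hres : volume.restrict (sqC 0 1 \ {0}) = volume.restrict (sqC 0 1) :=
        Measure.restrict_congr_set
          (diff_ae_eq_self.2 (measure_mono_null (inter_subset_right) null_zero_E2))
      rw [← hres]
      apply ContinuousOn.aestronglyMeasurable
      · intro x hx
        have hx0 : ‖x‖ ≠ 0 := by
          simp only [ne_eq, norm_eq_zero]
          exact fun h => hx.2 (by simp [h])
        exact ((Real.continuousAt_rpow_const ‖x‖ p (Or.inl hx0)).comp
          continuous_norm.continuousAt).continuousWithinAt
      · exact meas_sqC01.diff (measurableSet_singleton 0)
    refine Integrable.mono' h3 haesm ?_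
    have hnull : volume.restrict (sqC 0 1) ({x : E2 | x 0 = 0} ∪ {x : E2 | x 1 = 0}) = 0 := by
      apply le_antisymm _ zero_le
      calc volume.restrict (sqC 0 1) ({x : E2 | x 0 = 0} ∪ {x : E2 | x 1 = 0})
          ≤ volume ({x : E2 | x 0 = 0} ∪ {x : E2 | x 1 = 0}) := Measure.restrict_le_self _
        _ ≤ volume {x : E2 | x 0 = 0} + volume {x : E2 | x 1 = 0} := measure_union_le _ _
        _ = 0 := by rw [null_coord 0, null_coord 1, add_zero]
    rw [← compl_compl ({x : E2 | x 0 = 0} ∪ {x : E2 | x 1 = 0})] at hnull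
    filter_upwards [(measure_eq_zero_iff_ae_notMem.1 hnull)] with x hx
    simp only [compl_compl, mem_union, mem_setOf_eq, not_or] at hx
    obtain ⟨hx0, hx1⟩ := hx
    have h0 : (0:ℝ) < |x 0| := abs_pos.2 hx0
    have h1' : (0:ℝ) < |x 1| := abs_pos.2 hx1
    have hnp : 0 < ‖x‖ := norm_pos_of_coord hx0
    have hsq : ‖x‖ ^ (2:ℕ) = (x 0)^2 + (x 1)^2 := normsq_eq x
    have hle : |x 0| * |x 1| ≤ ‖x‖ ^ (2:ℕ) := by
      rw [hsq]; nlinarith [sq_abs (x 0), sq_abs (x 1), sq_nonneg (|x 0| - |x 1|)]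
    have key : ‖x‖ ^ p ≤ |x 0| ^ q * |x 1| ^ q := by
      have e1 : ((‖x‖ ^ (2:ℕ) : ℝ)) ^ q = ‖x‖ ^ p := by
        rw [← Real.rpow_natCast ‖x‖ 2, ← Real.rpow_mul (norm_nonneg x)]
        congr 1
        push_cast
        rw [hqdef]; ring
      rw [← e1, ← Real.mul_rpow (abs_nonneg _) (abs_nonneg _)]
      exact Real.rpow_le_rpow_of_nonpos (by positivity) hle hq0.le
    have : ‖(fun x : E2 => ‖x‖ ^ p) x‖ = ‖x‖ ^ p := by
      simp [Real.norm_eq_abs, abs_of_nonneg (Real.rpow_nonneg (norm_nonneg x) p)]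
    rw [this]
    exact key

open scoped ENNReal in
lemma uct_s6 (u : ℝ → ℝ) (hu : Continuous u)
    (hlim : ∀ s : ℝ, Tendsto (fun t => u (t + s) - u t) atTop (nhds 0))
    {ε : ℝ} (hε : 0 < ε) :
    ∃ T : ℝ, ∀ s ∈ Icc (0:ℝ) 1, ∀ t, T ≤ t → |u (t + s) - u t| ≤ ε := by
  set E : ℕ → Set ℝ :=
    fun k => {s : ℝ | s ∈ Icc (0:ℝ) 2 ∧ ∀ t : ℝ, (k:ℝ) ≤ t → |u (t + s) - u t| ≤ ε/2} with hE
  have hclosed : ∀ k, IsClosed (E k) := by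
    intro k
    have : E k = Icc (0:ℝ) 2 ∩ ⋂ (t : ℝ) (_ : t ∈ Ici (k:ℝ)), {s : ℝ | |u (t + s) - u t| ≤ ε/2} := by
      ext s
      simp only [hE, mem_setOf_eq, mem_inter_iff, mem_iInter, mem_Ici]
    rw [this]
    refine isClosed_Icc.inter (isClosed_biInter fun t ht => ?_)
    exact isClosed_le ((hu.comp (continuous_const.add continuous_id)).sub continuous_const).abs
      continuous_const
  have hmeas : ∀ k, MeasurableSet (E k) := fun k => (hclosed k).measurableSet
  have hmono : Monotone E := by
    intro k k' hkk' s hs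
    exact ⟨hs.1, fun t ht => hs.2 t (le_trans (by exact_mod_cast Nat.cast_le.2 hkk') ht)⟩
  have hcover : Icc (0:ℝ) 2 ⊆ ⋃ k, E k := by
    intro s hs
    have := (hlim s).eventually (Metric.closedBall_mem_nhds (0:ℝ) (by positivity : 0 < ε/2))
    rw [eventually_atTop] at this
    obtain ⟨N, hN⟩ := this
    refine mem_iUnion.2 ⟨⌈N⌉₊, hs, fun t ht => ?_⟩
    have := hN t (le_trans (Nat.le_ceil N) ht)
    simpa [Real.dist_eq] using this
  have hμ2 : ENNReal.ofReal 2 ≤ volume (⋃ k, E k) := by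
    have := measure_mono (μ := (volume : Measure ℝ)) hcover
    rwa [Real.volume_Icc, show (2:ℝ) - 0 = 2 by norm_num] at this
  obtain ⟨k, hk⟩ : ∃ k, ENNReal.ofReal (3/2) < volume (E k) := by
    rw [hmono.directed_le.measure_iUnion] at hμ2
    by_contra hcon
    push_neg at hcon
    have h32 : ENNReal.ofReal 2 ≤ ENNReal.ofReal (3/2) := hμ2.trans (iSup_le hcon)
    rw [ENNReal.ofReal_le_ofReal_iff (by norm_num)] at h32
    linarith
  refine ⟨(k:ℝ), fun s hs t ht => ?_⟩
  set B := (fun q : ℝ => q + s) ⁻¹' (E k) with hB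
  have hmeasB : MeasurableSet B := (hmeas k).preimage (measurable_add_const s)
  have hmB : volume B = volume (E k) := measure_preimage_add_right volume s (E k)
  have hsub : E k ∪ B ⊆ Icc (-1:ℝ) 2 := by
    rintro q (hq | hq)
    · exact ⟨le_trans (by norm_num) hq.1.1, hq.1.2⟩
    · have h1 := hq.1.1
      have h2 := hq.1.2
      constructor <;> simp only [mem_Icc] at * <;> [linarith [hs.2]; linarith [hs.1]]
  have hunion : volume (E k ∪ B) ≤ ENNReal.ofReal 3 := by
    refine le_trans (measure_mono hsub) ?_
    rw [Real.volume_Icc, show (2:ℝ) - (-1) = 3 by norm_num]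
  have hint : (E k ∩ B).Nonempty := by
    by_contra hemp
    rw [not_nonempty_iff_eq_empty] at hemp
    have hsum := measure_union_add_inter (μ := volume) (E k) hmeasB
    rw [hemp, measure_empty, add_zero] at hsum
    have h3 : ENNReal.ofReal 3 < volume (E k) + volume B := by
      rw [hmB]
      calc ENNReal.ofReal 3 = ENNReal.ofReal (3/2) + ENNReal.ofReal (3/2) := by
            rw [← ENNReal.ofReal_add (by norm_num) (by norm_num)]; norm_num
        _ < volume (E k) + volume (E k) := ENNReal.add_lt_add hk hk
    rw [← hsum] at h3
    exact absurd hunion (not_le.2 h3)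
  obtain ⟨q, hqA, hqB⟩ := hint
  have hqE : q + s ∈ E k := hqB
  have h1 : |u (t + (q + s)) - u t| ≤ ε/2 := hqE.2 t ht
  have h2 : |u ((t + s) + q) - u (t + s)| ≤ ε/2 := hqA.2 (t + s) (by linarith [hs.1])
  have harg : t + (q + s) = (t + s) + q := by ring
  have hdecomp : u (t + s) - u t
      = (u (t + (q + s)) - u t) - (u ((t + s) + q) - u (t + s)) := by
    rw [harg]; ring
  rw [hdecomp]
  calc |(u (t + (q + s)) - u t) - (u ((t + s) + q) - u (t + s))|
      ≤ |u (t + (q + s)) - u t| + |u ((t + s) + q) - u (t + s)| := abs_sub _ _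
    _ ≤ ε/2 + ε/2 := add_le_add h1 h2
    _ = ε := by ring

lemma chain (u : ℝ → ℝ) {ε T : ℝ} (hε : 0 ≤ ε)
    (h1 : ∀ s ∈ Icc (0:ℝ) 1, ∀ t, T ≤ t → |u (t + s) - u t| ≤ ε) :
    ∀ s : ℝ, 0 ≤ s → ∀ t, T ≤ t → |u (t + s) - u t| ≤ ε * (s + 1) := by
  have key : ∀ m : ℕ, ∀ s : ℝ, 0 ≤ s → s ≤ (m:ℝ) + 1 → ∀ t, T ≤ t →
      |u (t + s) - u t| ≤ ε * ((m:ℝ) + 1) := by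
    intro m
    induction m with
    | zero =>
      intro s hs0 hs1 t ht
      simpa using h1 s ⟨hs0, by simpa using hs1⟩ t ht
    | succ m ih =>
      intro s hs0 hs1 t ht
      rcases le_or_gt s ((m:ℝ)+1) with h | h
      · refine le_trans (ih s hs0 h t ht) ?_
        have : ((m:ℝ)+1) ≤ (((m+1:ℕ)):ℝ) + 1 := by push_cast; linarith
        nlinarith
      · have hm0 : (0:ℝ) ≤ (m:ℝ) := Nat.cast_nonneg m
        have hs1' : 0 ≤ s - 1 := by linarith
        have hle : s - 1 ≤ (m:ℝ) + 1 := by push_cast at hs1 ⊢; linarith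
        have hA := ih (s-1) hs1' hle (t+1) (by linarith)
        have hB := h1 1 ⟨by norm_num, le_refl 1⟩ t ht
        have harg : t + 1 + (s - 1) = t + s := by ring
        rw [harg] at hA
        calc |u (t + s) - u t| = |(u (t+s) - u (t+1)) + (u (t+1) - u t)| := by
              rw [sub_add_sub_cancel]
          _ ≤ |u (t+s) - u (t+1)| + |u (t+1) - u t| := abs_add_le _ _
          _ ≤ ε * ((m:ℝ)+1) + ε := add_le_add hA hB
          _ = ε * (((m:ℝ))+1+1) := by ring
          _ = ε * ((((m+1):ℕ):ℝ)+1) := by push_cast; ring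
  intro s hs t ht
  have hm := key ⌊s⌋₊ s hs (by push_cast; linarith [Nat.lt_floor_add_one s]) t ht
  refine hm.trans ?_
  have hfl : ((⌊s⌋₊:ℝ)) ≤ s := Nat.floor_le hs
  nlinarith

lemma potter (L : ℝ → ℝ) (hLpos : ∀ x : ℝ, 0 < x → 0 < L x)
    (hSV : SlowlyVaryingAtZero L) (hLcont : ContinuousOn L (Set.Ioi 0))
    {ε : ℝ} (hε : 0 < ε) :
    ∃ A : ℝ, 0 < A ∧ ∃ N : ℕ, 1 ≤ N ∧ ∀ n : ℕ, N ≤ n → ∀ δ : ℝ, 0 < δ → δ ≤ Real.sqrt 2 →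
      L (δ / n) / L (1 / n) ≤ A * δ ^ (-ε) := by
  set u : ℝ → ℝ := fun t => Real.log (L (Real.exp (-t))) with hudef
  have hucont : Continuous u := by
    refine continuous_iff_continuousAt.2 fun t => ?_
    have h1 : ContinuousAt L (Real.exp (-t)) :=
      hLcont.continuousAt (Ioi_mem_nhds (Real.exp_pos _))
    have h2 : ContinuousAt Real.log (L (Real.exp (-t))) :=
      Real.continuousAt_log (ne_of_gt (hLpos _ (Real.exp_pos _)))
    have h3 : ContinuousAt (fun t : ℝ => Real.exp (-t)) t :=
      (Real.continuous_exp.comp continuous_neg).continuousAt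
    have h4 : ContinuousAt (L ∘ fun t : ℝ => Real.exp (-t)) t := ContinuousAt.comp (x := t) h1 h3
    exact ContinuousAt.comp (x := t) h2 h4
  have hulim : ∀ s : ℝ, Tendsto (fun t => u (t + s) - u t) atTop (nhds 0) := by
    intro s
    have h1 := hSV (Real.exp (-s)) (Real.exp_pos _)
    have h2 : Tendsto (fun t : ℝ => Real.exp (-t)) atTop (nhdsWithin 0 (Set.Ioi 0)) := by
      apply tendsto_nhdsWithin_of_tendsto_nhds_of_eventually_within
      · exact Real.tendsto_exp_neg_atTop_nhds_zero
      · exact Eventually.of_forall (fun t => Real.exp_pos _)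
    have h3 := h1.comp h2
    have h4 : Tendsto (fun t : ℝ =>
        Real.log (L (Real.exp (-s) * Real.exp (-t)) / L (Real.exp (-t)))) atTop (nhds 0) := by
      have := ((Real.continuousAt_log one_ne_zero).tendsto).comp h3
      simpa [Function.comp_def] using this
    refine h4.congr fun t => ?_
    have e1 : Real.exp (-s) * Real.exp (-t) = Real.exp (-(t+s)) := by
      rw [← Real.exp_add]; ring_nf
    rw [e1, Real.log_div (ne_of_gt (hLpos _ (Real.exp_pos _)))
      (ne_of_gt (hLpos _ (Real.exp_pos _)))]
  obtain ⟨T, hT⟩ := uct_s6 u hucont hulim hε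
  have hchain := chain u hε.le hT
  refine ⟨Real.exp (3*ε), Real.exp_pos _, ⌈Real.exp (T + 1)⌉₊,
    Nat.one_le_ceil_iff.2 (Real.exp_pos _), ?_⟩
  intro n hn δ hδ hδ2
  have hn1 : 1 ≤ n := le_trans (Nat.one_le_ceil_iff.2 (Real.exp_pos _)) hn
  have hnpos : (0:ℝ) < n := by exact_mod_cast Nat.pos_of_ne_zero (by omega)
  have ht : T + 1 ≤ Real.log n := by
    rw [Real.le_log_iff_exp_le hnpos]
    calc Real.exp (T+1) ≤ (⌈Real.exp (T+1)⌉₊ : ℝ) := Nat.le_ceil _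
      _ ≤ n := by exact_mod_cast hn
  set t := Real.log n with htdef
  set s := - Real.log δ with hsdef
  have hsqrt2 : Real.log δ ≤ 1 := by
    have hs2 : Real.sqrt 2 ≤ 2 := by
      nlinarith [Real.sq_sqrt (by norm_num : (0:ℝ) ≤ 2), Real.sqrt_nonneg 2]
    have h2e : (2:ℝ) ≤ Real.exp 1 := by linarith [Real.add_one_le_exp 1]
    calc Real.log δ ≤ Real.log (Real.sqrt 2) := Real.log_le_log hδ hδ2
      _ ≤ Real.log (Real.exp 1) := Real.log_le_log (Real.sqrt_pos.2 (by norm_num))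
          (hs2.trans h2e)
      _ = 1 := Real.log_exp 1
  have hs_lb : -1 ≤ s := by rw [hsdef]; linarith
  have hub : u (t + s) - u t ≤ ε * (|s| + 1) := by
    rcases le_or_gt 0 s with hs0 | hs0
    · have h := hchain s hs0 t (by linarith)
      calc u (t + s) - u t ≤ |u (t + s) - u t| := le_abs_self _
        _ ≤ ε * (s + 1) := h
        _ = ε * (|s| + 1) := by rw [abs_of_nonneg hs0]
    · have harg : (t + s) + (-s) = t := by ring
      have h := hT (-s) ⟨by linarith, by linarith⟩ (t + s) (by linarith)
      rw [harg] at h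
      calc u (t + s) - u t ≤ |u (t + s) - u t| := le_abs_self _
        _ = |u t - u (t + s)| := abs_sub_comm _ _
        _ ≤ ε := h
        _ ≤ ε * (|s| + 1) := by nlinarith [abs_nonneg s]
  have hratio : L (δ / n) / L (1 / n) = Real.exp (u (t + s) - u t) := by
    have e1 : Real.exp (-(t+s)) = δ / n := by
      rw [show -(t+s) = Real.log δ - Real.log n by rw [hsdef, htdef]; ring,
        Real.exp_sub, Real.exp_log hδ, Real.exp_log hnpos]
    have e2 : Real.exp (-t) = 1 / n := by
      rw [htdef, Real.exp_neg, Real.exp_log hnpos, one_div]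
    have hd : (0:ℝ) < δ / n := by positivity
    have ho : (0:ℝ) < 1 / (n:ℝ) := by positivity
    rw [hudef]
    simp only []
    rw [e1, e2, Real.exp_sub, Real.exp_log (hLpos _ hd), Real.exp_log (hLpos _ ho)]
  have habs : |s| + 1 ≤ 3 + s := by
    rcases abs_cases s with ⟨h, _⟩ | ⟨h, _⟩ <;> rw [h] <;> linarith
  have hfinal : u (t + s) - u t ≤ 3*ε + ε * s :=
    le_trans hub (by nlinarith)
  rw [hratio]
  calc Real.exp (u (t + s) - u t) ≤ Real.exp (3*ε + ε * s) := Real.exp_le_exp.2 hfinal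
    _ = Real.exp (3*ε) * Real.exp (ε * s) := Real.exp_add _ _
    _ = Real.exp (3*ε) * δ ^ (-ε) := by
        rw [Real.rpow_def_of_pos hδ]
        congr 1
        rw [hsdef]; ring

lemma ratio_tendsto {L : ℝ → ℝ} (hSV : SlowlyVaryingAtZero L) {δ : ℝ} (hδ : 0 < δ) :
    Tendsto (fun n : ℕ => L (δ / n) / L (1 / n)) atTop (nhds 1) := by
  have h1 := hSV δ hδ
  have h2 : Tendsto (fun n : ℕ => 1 / (n:ℝ)) atTop (nhdsWithin 0 (Set.Ioi 0)) := by
    apply tendsto_nhdsWithin_of_tendsto_nhds_of_eventually_within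
    · exact tendsto_one_div_atTop_nhds_zero_nat
    · filter_upwards [eventually_gt_atTop 0] with n hn
      have : (0:ℝ) < n := by exact_mod_cast hn
      exact mem_Ioi.2 (by positivity)
  have h3 := h1.comp h2
  refine h3.congr fun n => ?_
  simp only [Function.comp_apply, mul_one_div]

lemma aesm_of_contOn {f : E2 → ℝ} (hf : ∀ x : E2, x ≠ 0 → ContinuousAt f x) :
    AEStronglyMeasurable f (volume.restrict (sqC 0 1)) := by
  have hres : volume.restrict (sqC 0 1 \ {0}) = volume.restrict (sqC 0 1) :=
    Measure.restrict_congr_set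
      (diff_ae_eq_self.2 (measure_mono_null inter_subset_right null_zero_E2))
  rw [← hres]
  apply ContinuousOn.aestronglyMeasurable
  · exact fun x hx => (hf x (fun h => hx.2 (by simp [h]))).continuousWithinAt
  · exact meas_sqC01.diff (measurableSet_singleton 0)

lemma contAt_rpow_norm (β : ℝ) {x : E2} (hx : x ≠ 0) :
    ContinuousAt (fun y : E2 => ‖y‖ ^ β) x := by
  have h1 : ContinuousAt (fun t : ℝ => t ^ β) ‖x‖ :=
    Real.continuousAt_rpow_const _ _ (Or.inl (norm_ne_zero_iff.2 hx))
  exact ContinuousAt.comp (x := x) h1 continuous_norm.continuousAt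

lemma contAt_L_norm {L : ℝ → ℝ} (hLcont : ContinuousOn L (Set.Ioi 0)) {n : ℕ}
    (hn : 1 ≤ n) {x : E2} (hx : x ≠ 0) :
    ContinuousAt (fun y : E2 => L (‖y‖ / n)) x := by
  have hnp : (0:ℝ) < n := by exact_mod_cast hn
  have hxp : 0 < ‖x‖ := norm_pos_iff.2 hx
  have h1 : ContinuousAt L (‖x‖ / n) :=
    hLcont.continuousAt (Ioi_mem_nhds (by positivity))
  have h2 : ContinuousAt (fun y : E2 => ‖y‖ / (n:ℝ)) x :=
    (continuous_norm.div_const _).continuousAt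
  exact ContinuousAt.comp (x := x) h1 h2

lemma rpow_double {y : ℝ} (hy : 0 ≤ y) (c : ℝ) : y ^ (2*c) = (y ^ c)^2 := by
  rw [show 2*c = c*2 by ring, Real.rpow_mul hy, Real.rpow_two]

set_option maxHeartbeats 1000000 in
theorem stmt6 (α : ℝ) (hα : -1 < α)
    (L : ℝ → ℝ) (hLpos : ∀ x : ℝ, 0 < x → 0 < L x)
    (hSV : SlowlyVaryingAtZero L)
    (hA1 : ContDiffOn ℝ 1 L (Set.Ioi 0))
    (hA1' : ∀ u : ℝ, 0 < u → ∃ ε > (0 : ℝ), ∀ x ∈ Set.Ioc u (Real.sqrt 2), ε ≤ L x)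
    (C : ℝ) (hC : 0 < C)
    (hA4 : ∀ x ∈ Set.Ioc (0 : ℝ) 1, |deriv L x| ≤ C * (1 + x⁻¹))
    (b₀ : E2) (hb₀ : b₀ ∈ sqC 0 1) (hb₀0 : b₀ ≠ 0) :
    Tendsto (fun n : ℕ => ∫ x in sqC 0 1,
        (‖x‖ ^ α * (L (‖x‖ / n) / L (1 / n)) - ‖b₀‖ ^ α * (L (‖b₀‖ / n) / L (1 / n))) ^ 2)
      atTop (nhds (∫ x in sqC 0 1, (‖x‖ ^ α - ‖b₀‖ ^ α) ^ 2)) ∧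
    Tendsto (fun n : ℕ => ∫ x in sqC 0 1,
        ‖x‖ ^ (2 * α) * (L (‖x‖ / n) / L (1 / n) - L (‖b₀‖ / n) / L (1 / n)) ^ 2)
      atTop (nhds 0) := by
  have hb0pos : 0 < ‖b₀‖ := norm_pos_iff.2 hb₀0
  have hsq1 : (1:ℝ) ≤ Real.sqrt 2 := by
    rw [show (1:ℝ) = Real.sqrt 1 by rw [Real.sqrt_one]]
    exact Real.sqrt_le_sqrt (by norm_num)
  have hble : ‖b₀‖ ≤ Real.sqrt 2 := (norm_le_sqC01 hb₀).trans hsq1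
  set ε : ℝ := (α+1)/2 with hεdef
  have hεpos : 0 < ε := by rw [hεdef]; linarith
  have hLcont : ContinuousOn L (Set.Ioi 0) := hA1.continuousOn
  obtain ⟨A, hApos, N, hN1, hPot⟩ := potter L hLpos hSV hLcont hεpos
  have h2ae : -2 < 2*(α-ε) := by rw [hεdef]; linarith
  have h2a : -2 < 2*α := by linarith
  set μ := volume.restrict (sqC 0 1) with hμdef
  have hae0 : ∀ᵐ x : E2 ∂μ, x ≠ 0 := by
    rw [ae_iff]
    have hset : {x : E2 | ¬ x ≠ 0} = {0} := by ext x; simp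
    rw [hset, hμdef]
    exact le_antisymm ((Measure.restrict_apply_le _ _).trans (le_of_eq null_zero_E2)) (by simp)
  have haesq : ∀ᵐ x : E2 ∂μ, x ∈ sqC 0 1 := ae_restrict_mem meas_sqC01
  have haesm_g : ∀ (n : ℕ), 1 ≤ n → ∀ β : ℝ,
      AEStronglyMeasurable (fun x : E2 => ‖x‖ ^ β * (L (‖x‖ / n) / L (1 / n))) μ := by
    intro n hn β
    apply aesm_of_contOn
    intro x hx
    exact (contAt_rpow_norm β hx).mul ((contAt_L_norm hLcont hn hx).div_const _)
  constructor
  · -- Part 1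
    refine tendsto_integral_filter_of_dominated_convergence
      (fun x : E2 => 2*(A*‖x‖^(α-ε))^2 + 2*(A*‖b₀‖^(α-ε))^2) ?_ ?_ ?_ ?_
    · filter_upwards [eventually_ge_atTop 1] with n hn
      have h := (haesm_g n hn α).sub (aestronglyMeasurable_const
        (b := ‖b₀‖ ^ α * (L (‖b₀‖ / n) / L (1 / n))))
      exact (h.mul h).congr (Eventually.of_forall fun x => (pow_two _).symm)
    · filter_upwards [eventually_ge_atTop N] with n hn
      have hn1 : 1 ≤ n := le_trans hN1 hn
      have hnp : (0:ℝ) < n := by exact_mod_cast hn1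
      filter_upwards [hae0, haesq] with x hx0 hxs
      have hxp : 0 < ‖x‖ := norm_pos_iff.2 hx0
      have hxle : ‖x‖ ≤ Real.sqrt 2 := (norm_le_sqC01 hxs).trans hsq1
      have hrx := hPot n hn ‖x‖ hxp hxle
      have hrb := hPot n hn ‖b₀‖ hb0pos hble
      have hLx : 0 < L (‖x‖ / n) := hLpos _ (by positivity)
      have hLb : 0 < L (‖b₀‖ / n) := hLpos _ (by positivity)
      have hL1 : 0 < L (1 / n) := hLpos _ (by positivity)
      set a := ‖x‖ ^ α * (L (‖x‖ / n) / L (1 / n)) with hadef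
      set b := ‖b₀‖ ^ α * (L (‖b₀‖ / n) / L (1 / n)) with hbdef
      have ha0 : 0 ≤ a :=
        mul_nonneg (Real.rpow_nonneg (norm_nonneg _) _) (le_of_lt (div_pos hLx hL1))
      have hb0 : 0 ≤ b :=
        mul_nonneg (Real.rpow_nonneg (norm_nonneg _) _) (le_of_lt (div_pos hLb hL1))
      have haA : a ≤ A * ‖x‖ ^ (α - ε) := by
        calc a ≤ ‖x‖^α * (A * ‖x‖^(-ε)) :=
              mul_le_mul_of_nonneg_left hrx (Real.rpow_nonneg (norm_nonneg _) _)
          _ = A * ‖x‖ ^ (α - ε) := by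
              rw [sub_eq_add_neg, Real.rpow_add hxp]; ring
      have hbA : b ≤ A * ‖b₀‖ ^ (α - ε) := by
        calc b ≤ ‖b₀‖^α * (A * ‖b₀‖^(-ε)) :=
              mul_le_mul_of_nonneg_left hrb (Real.rpow_nonneg (norm_nonneg _) _)
          _ = A * ‖b₀‖ ^ (α - ε) := by
              rw [sub_eq_add_neg, Real.rpow_add hb0pos]; ring
      have ha2 : a^2 ≤ (A*‖x‖^(α-ε))^2 := pow_le_pow_left₀ ha0 haA 2
      have hb2 : b^2 ≤ (A*‖b₀‖^(α-ε))^2 := pow_le_pow_left₀ hb0 hbA 2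
      rw [Real.norm_eq_abs, abs_of_nonneg (sq_nonneg _)]
      have hs1 : (a-b)^2 ≤ a^2 + b^2 := by nlinarith [mul_nonneg ha0 hb0]
      linarith [ha2, hb2, sq_nonneg (A*‖x‖^(α-ε)), sq_nonneg (A*‖b₀‖^(α-ε))]
    · have hI := int2D h2ae
      have hIc : IntegrableOn (fun _ : E2 => (2*(A*‖b₀‖^(α-ε))^2 : ℝ)) (sqC 0 1) volume :=
        integrableOn_const isCompact_sqC01.measure_lt_top.ne
      have hsum : IntegrableOn
          (fun x : E2 => 2*A^2 * ‖x‖^(2*(α-ε)) + 2*(A*‖b₀‖^(α-ε))^2) (sqC 0 1) volume :=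
        (hI.const_mul (2*A^2)).add hIc
      refine hsum.congr (Eventually.of_forall fun x => ?_)
      simp only [rpow_double (norm_nonneg x)]
      ring
    · filter_upwards [hae0] with x hx0
      have hxp : 0 < ‖x‖ := norm_pos_iff.2 hx0
      have t1 := ratio_tendsto hSV hxp
      have t2 := ratio_tendsto hSV hb0pos
      have := ((t1.const_mul (‖x‖^α)).sub (t2.const_mul (‖b₀‖^α))).pow 2
      simpa using this
  · -- Part 2
    have key := tendsto_integral_filter_of_dominated_convergence (μ := μ) (l := atTop)
      (F := fun (n:ℕ) (x : E2) =>
        ‖x‖ ^ (2*α) * (L (‖x‖ / n) / L (1 / n) - L (‖b₀‖ / n) / L (1 / n))^2)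
      (f := fun _ => (0:ℝ))
      (bound := fun x : E2 => 2*(A*‖x‖^(α-ε))^2 + 2*(A*‖b₀‖^(-ε)*‖x‖^α)^2)
      ?_ ?_ ?_ ?_
    · simpa using key
    · filter_upwards [eventually_ge_atTop 1] with n hn
      have haesm_n : AEStronglyMeasurable (fun x : E2 => ‖x‖^(2*α)) μ :=
        aesm_of_contOn (fun x hx => contAt_rpow_norm _ hx)
      have haesm_r : AEStronglyMeasurable (fun x : E2 => L (‖x‖/n)/L (1/n)) μ :=
        aesm_of_contOn (fun x hx => (contAt_L_norm hLcont hn hx).div_const _)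
      have hd := haesm_r.sub (aestronglyMeasurable_const (b := L (‖b₀‖ / n) / L (1 / n)))
      exact haesm_n.mul ((hd.mul hd).congr (Eventually.of_forall fun x => (pow_two _).symm))
    · filter_upwards [eventually_ge_atTop N] with n hn
      have hn1 : 1 ≤ n := le_trans hN1 hn
      have hnp : (0:ℝ) < n := by exact_mod_cast hn1
      filter_upwards [hae0, haesq] with x hx0 hxs
      have hxp : 0 < ‖x‖ := norm_pos_iff.2 hx0
      have hxle : ‖x‖ ≤ Real.sqrt 2 := (norm_le_sqC01 hxs).trans hsq1
      have hrx := hPot n hn ‖x‖ hxp hxle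
      have hrb := hPot n hn ‖b₀‖ hb0pos hble
      have hLx : 0 < L (‖x‖ / n) := hLpos _ (by positivity)
      have hLb : 0 < L (‖b₀‖ / n) := hLpos _ (by positivity)
      have hL1 : 0 < L (1 / n) := hLpos _ (by positivity)
      set a := ‖x‖ ^ α * (L (‖x‖ / n) / L (1 / n)) with hadef
      set b := ‖x‖ ^ α * (L (‖b₀‖ / n) / L (1 / n)) with hbdef
      have ha0 : 0 ≤ a :=
        mul_nonneg (Real.rpow_nonneg (norm_nonneg _) _) (le_of_lt (div_pos hLx hL1))
      have hb0 : 0 ≤ b :=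
        mul_nonneg (Real.rpow_nonneg (norm_nonneg _) _) (le_of_lt (div_pos hLb hL1))
      have haA : a ≤ A * ‖x‖ ^ (α - ε) := by
        calc a ≤ ‖x‖^α * (A * ‖x‖^(-ε)) :=
              mul_le_mul_of_nonneg_left hrx (Real.rpow_nonneg (norm_nonneg _) _)
          _ = A * ‖x‖ ^ (α - ε) := by
              rw [sub_eq_add_neg, Real.rpow_add hxp]; ring
      have hbA : b ≤ A * ‖b₀‖ ^ (-ε) * ‖x‖^α := by
        calc b ≤ ‖x‖^α * (A * ‖b₀‖^(-ε)) :=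
              mul_le_mul_of_nonneg_left hrb (Real.rpow_nonneg (norm_nonneg _) _)
          _ = A * ‖b₀‖ ^ (-ε) * ‖x‖^α := by ring
      have ha2 : a^2 ≤ (A*‖x‖^(α-ε))^2 := pow_le_pow_left₀ ha0 haA 2
      have hb2 : b^2 ≤ (A*‖b₀‖^(-ε)*‖x‖^α)^2 := pow_le_pow_left₀ hb0 hbA 2
      have hkey : ‖x‖ ^ (2*α) * (L (‖x‖ / n) / L (1 / n) - L (‖b₀‖ / n) / L (1 / n))^2
          = (a - b)^2 := by
        rw [rpow_double (norm_nonneg x), hadef, hbdef, ← mul_sub, mul_pow]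
      rw [Real.norm_eq_abs, hkey, abs_of_nonneg (sq_nonneg _)]
      have hs1 : (a-b)^2 ≤ a^2 + b^2 := by nlinarith [mul_nonneg ha0 hb0]
      linarith [ha2, hb2, sq_nonneg (A*‖x‖^(α-ε)), sq_nonneg (A*‖b₀‖^(-ε)*‖x‖^α)]
    · have hI := int2D h2ae
      have hI2 := int2D h2a
      have hsum : IntegrableOn
          (fun x : E2 => 2*A^2 * ‖x‖^(2*(α-ε)) + 2*(A*‖b₀‖^(-ε))^2 * ‖x‖^(2*α))
          (sqC 0 1) volume :=
        (hI.const_mul (2*A^2)).add (hI2.const_mul (2*(A*‖b₀‖^(-ε))^2))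
      refine hsum.congr (Eventually.of_forall fun x => ?_)
      simp only [rpow_double (norm_nonneg x)]
      ring
    · filter_upwards [hae0] with x hx0
      have hxp : 0 < ‖x‖ := norm_pos_iff.2 hx0
      have t1 := ratio_tendsto hSV hxp
      have t2 := ratio_tendsto hSV hb0pos
      have := ((t1.sub t2).pow 2).const_mul (‖x‖^(2*α))
      simpa using this
end
end
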